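/- For every D > 0 there exists a function H : ℤ → [0,1] with H(n) = 0 for all n ≤ 0 such that, defining c_k(n) = H(n) - H(n-k), each c_k belongs to ℓ²(ℤ) and ‖c_k‖₂² ≥ D |k|^{3/2} for all k ∈ ℤ. -/

import Mathlib

def sS (A : ℕ) : ℕ → ℤ
  | 0 => 1
  | m+1 => sS A m + 2 * 4^m * (A * 2^m)

noncomputable def tri (m : ℕ) (j : ℤ) : ℝ :=
  (↑(min (j % (2*4^m : ℤ)) ((2*4^m : ℤ) - j % (2*4^m : ℤ))) : ℝ) / (4:ℝ)^m

def idxx (A : ℕ) (n : ℤ) : ℕ := Nat.findGreatest (fun m => sS A m ≤ n) n.toNat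

noncomputable def Hf (A : ℕ) (n : ℤ) : ℝ := if 1 ≤ n then tri (idxx A n) (n - sS A (idxx A n)) else 0

lemma sS_succ (A : ℕ) (m : ℕ) : sS A (m+1) = sS A m + 2 * 4^m * (A * 2^m) := rfl

lemma sS_ge {A : ℕ} (hA : 1 ≤ A) (m : ℕ) : (m : ℤ) + 1 ≤ sS A m := by
  induction m with
  | zero => simp [sS]
  | succ m ih =>
    rw [sS_succ]
    have h4 : (1:ℤ) ≤ 4^m := one_le_pow₀ (by norm_num)
    have h2 : (1:ℤ) ≤ 2^m := one_le_pow₀ (by norm_num)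
    have hpos : (0:ℤ) < 2 * 4^m * ((A:ℤ) * 2^m) :=
      mul_pos (by positivity) (mul_pos (by omega) (by positivity))
    push_cast
    push_cast at hpos
    linarith

lemma sS_strictMono {A : ℕ} (hA : 1 ≤ A) : StrictMono (sS A) := by
  apply strictMono_nat_of_lt_succ
  intro m
  rw [sS_succ]
  have h4 : (1:ℤ) ≤ 4^m := one_le_pow₀ (by norm_num)
  have h2 : (1:ℤ) ≤ 2^m := one_le_pow₀ (by norm_num)
  have hA' : (1:ℤ) ≤ (A:ℤ) := by exact_mod_cast hA
  have hpos : (0:ℤ) < 2 * 4^m * ((A:ℤ) * 2^m) :=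
    mul_pos (by positivity) (mul_pos (by omega) (by positivity))
  linarith

lemma idxx_eq {A : ℕ} (hA : 1 ≤ A) {m : ℕ} {n : ℤ} (h1 : sS A m ≤ n) (h2 : n < sS A (m+1)) :
    idxx A n = m := by
  have hmn : (m : ℤ) + 1 ≤ n := le_trans (sS_ge hA m) h1
  rw [idxx, Nat.findGreatest_eq_iff]
  refine ⟨by omega, fun _ => h1, ?_⟩
  intro p hp _ hle
  have : sS A (m+1) ≤ sS A p := (sS_strictMono hA).monotone hp
  omega

lemma idxx_spec {A : ℕ} (hA : 1 ≤ A) {n : ℤ} (hn : 1 ≤ n) :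
    sS A (idxx A n) ≤ n ∧ n < sS A (idxx A n + 1) := by
  have h0 : sS A (idxx A n) ≤ n := by
    exact Nat.findGreatest_spec (P := fun m => sS A m ≤ n) (m := 0) (by omega)
      (by simpa [sS] using hn)
  refine ⟨h0, ?_⟩
  by_contra hcon
  push_neg at hcon
  have hge : ((idxx A n : ℤ)) + 1 + 1 ≤ sS A (idxx A n + 1) := sS_ge hA _
  have hb : idxx A n + 1 ≤ n.toNat := by omega
  exact Nat.findGreatest_is_greatest (Nat.lt_succ_self _) hb hcon

lemma Hf_eval {A : ℕ} (hA : 1 ≤ A) {m : ℕ} {n : ℤ} (h1 : sS A m ≤ n) (h2 : n < sS A (m+1)) :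
    Hf A n = tri m (n - sS A m) := by
  have hn : 1 ≤ n := le_trans (by have := sS_ge hA m; omega) h1
  rw [Hf, if_pos hn, idxx_eq hA h1 h2]

lemma tri_mem (m : ℕ) (j : ℤ) : tri m j ∈ Set.Icc (0:ℝ) 1 := by
  have hL1 : (1:ℤ) ≤ 4^m := one_le_pow₀ (by norm_num)
  have hr0 : 0 ≤ j % (2*4^m:ℤ) := Int.emod_nonneg j (by positivity)
  have hr1 : j % (2*4^m:ℤ) < 2*4^m := Int.emod_lt_of_pos j (by positivity)
  rw [tri]
  constructor
  · apply div_nonneg _ (by positivity)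
    have : (0:ℤ) ≤ min (j % (2*4^m:ℤ)) ((2*4^m:ℤ) - j % (2*4^m:ℤ)) := by omega
    exact_mod_cast this
  · rw [div_le_one (by positivity)]
    have : min (j % (2*4^m:ℤ)) ((2*4^m:ℤ) - j % (2*4^m:ℤ)) ≤ 4^m := by omega
    calc (↑(min (j % (2*4^m:ℤ)) ((2*4^m:ℤ) - j % (2*4^m:ℤ))) : ℝ) ≤ ((4^m : ℤ) : ℝ) := by
          exact_mod_cast this
    _ = (4:ℝ)^m := by push_cast; ring

lemma tri_eval (m : ℕ) {i j : ℤ} (hi0 : 0 ≤ i) (hiL : i ≤ 4^m) :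
    tri m (2*4^m*j + i) = (i:ℝ) / (4:ℝ)^m := by
  have hL1 : (1:ℤ) ≤ 4^m := one_le_pow₀ (by norm_num)
  have h1 : (2*4^m*j + i) % (2*4^m:ℤ) = i := by
    rw [add_comm, Int.add_mul_emod_self_left]
    exact Int.emod_eq_of_lt hi0 (by omega)
  rw [tri, h1, min_eq_left (by omega)]

lemma tri_step (m : ℕ) (j : ℤ) : |tri m (j+1) - tri m j| ≤ ((4:ℝ)^m)⁻¹ := by
  have hL1 : (1:ℤ) ≤ 4^m := one_le_pow₀ (by norm_num)
  have hr0 : 0 ≤ j % (2*4^m:ℤ) := Int.emod_nonneg j (by positivity)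
  have hr1 : j % (2*4^m:ℤ) < 2*4^m := Int.emod_lt_of_pos j (by positivity)
  have h1 : (j+1) % (2*4^m:ℤ) = (j % (2*4^m:ℤ) + 1) % (2*4^m:ℤ) := by
    rw [Int.add_emod, Int.emod_eq_of_lt (by norm_num : (0:ℤ) ≤ 1) (by omega)]
  have key : |min ((j+1) % (2*4^m:ℤ)) (2*4^m - (j+1) % (2*4^m:ℤ)) -
      min (j % (2*4^m:ℤ)) (2*4^m - j % (2*4^m:ℤ))| ≤ 1 := by
    rcases eq_or_lt_of_le (by omega : j % (2*4^m:ℤ) + 1 ≤ 2*4^m) with h | h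
    · have h2 : (j+1) % (2*4^m:ℤ) = 0 := by rw [h1, h]; simp
      rw [h2, abs_le]; omega
    · have h2 : (j+1) % (2*4^m:ℤ) = j % (2*4^m:ℤ) + 1 := by
        rw [h1]; exact Int.emod_eq_of_lt (by omega) h
      rw [h2, abs_le]; omega
  have heq : tri m (j+1) - tri m j = ((min ((j+1) % (2*4^m:ℤ)) (2*4^m - (j+1) % (2*4^m:ℤ)) -
      min (j % (2*4^m:ℤ)) (2*4^m - j % (2*4^m:ℤ)) : ℤ) : ℝ) / (4:ℝ)^m := by
    rw [tri, tri]; push_cast; ring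
  rw [heq, abs_div, abs_of_pos (by positivity : (0:ℝ) < (4:ℝ)^m), div_le_iff₀ (by positivity),
    inv_mul_cancel₀ (by positivity)]
  exact_mod_cast key

lemma tri_zero (m : ℕ) : tri m 0 = 0 := by
  simp [tri]

lemma tri_top (m : ℕ) {N : ℤ} (hN : 1 ≤ N) : tri m (2*4^m*N - 1) = ((4:ℝ)^m)⁻¹ := by
  have hL1 : (1:ℤ) ≤ 4^m := one_le_pow₀ (by norm_num)
  have h1 : (2*4^m*N - 1) % (2*4^m:ℤ) = 2*4^m - 1 := by
    have h2 : 2*4^m*N - 1 = (2*4^m - 1) + 2*4^m*(N-1) := by ring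
    rw [h2, Int.add_mul_emod_self_left]
    exact Int.emod_eq_of_lt (by omega) (by omega)
  rw [tri, h1, min_eq_right (by omega)]
  have : (2*4^m:ℤ) - (2*4^m - 1) = 1 := by ring
  rw [this]
  simp

lemma Hf_mem (A : ℕ) (n : ℤ) : Hf A n ∈ Set.Icc (0:ℝ) 1 := by
  rw [Hf]
  split
  · exact tri_mem _ _
  · norm_num

lemma Hf_zero (A : ℕ) {n : ℤ} (hn : n ≤ 0) : Hf A n = 0 := by
  rw [Hf, if_neg (by omega)]

lemma sS_le_pow {A : ℕ} (hA : 1 ≤ A) (m : ℕ) : sS A m ≤ (A:ℤ) * 8^m := by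
  induction m with
  | zero =>
    simpa [sS] using (by exact_mod_cast hA : (1:ℤ) ≤ (A:ℤ))
  | succ m ih =>
    rw [sS_succ]
    have h48 : (4:ℤ)^m * 2^m = 8^m := by rw [← mul_pow]; norm_num
    have h8 : (8:ℤ)^(m+1) = 8 * 8^m := by ring
    have h8pos : (0:ℤ) < 8^m := by positivity
    have hA' : (1:ℤ) ≤ (A:ℤ) := by exact_mod_cast hA
    rw [h8]
    nlinarith

noncomputable def dd (A : ℕ) (n : ℤ) : ℝ := Hf A n - Hf A (n-1)

lemma dd_zero {A : ℕ} (hA : 1 ≤ A) {n : ℤ} (hn : n ≤ 1) : dd A n = 0 := by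
  rcases lt_or_eq_of_le hn with h | h
  · rw [dd, Hf_zero A (by omega), Hf_zero A (by omega), sub_zero]
  · subst h
    have hS1 : sS A 1 = 1 + 2 * (A:ℤ) := by rw [sS_succ]; simp [sS]; try ring
    have h1 : Hf A 1 = tri 0 (1 - sS A 0) := by
      apply Hf_eval hA
      · simp [sS]
      · rw [hS1]; omega
    rw [dd, h1]
    have : (1:ℤ) - sS A 0 = 0 := by simp [sS]
    rw [this, tri_zero, Hf_zero A (by omega), sub_zero]

lemma dd_bound {A : ℕ} (hA : 1 ≤ A) {n : ℤ} (hn : 2 ≤ n) :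
    |dd A n| ≤ ((4:ℝ)^(idxx A (n-1)))⁻¹ := by
  obtain ⟨h1, h2⟩ := idxx_spec hA (by omega : 1 ≤ n - 1)
  set m := idxx A (n-1) with hm
  rcases lt_or_eq_of_le (by omega : n ≤ sS A (m+1)) with h | h
  · have hn1 : Hf A n = tri m (n - sS A m) := Hf_eval hA (by omega) h
    have hn2 : Hf A (n-1) = tri m (n - 1 - sS A m) := Hf_eval hA h1 (by omega)
    have harg : n - sS A m = (n - 1 - sS A m) + 1 := by ring
    rw [dd, hn1, hn2, harg]
    exact tri_step m _
  · have hn1 : Hf A n = tri (m+1) (n - sS A (m+1)) := by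
      apply Hf_eval hA (by omega)
      have := sS_strictMono hA (show m+1 < m+1+1 by omega)
      omega
    have hn2 : Hf A (n-1) = tri m (n - 1 - sS A m) := Hf_eval hA h1 (by omega)
    have harg0 : n - sS A (m+1) = 0 := by omega
    have harg1 : n - 1 - sS A m = 2*4^m*((A:ℤ)*2^m) - 1 := by
      have := sS_succ A m; omega
    have hN1 : (1:ℤ) ≤ (A:ℤ)*2^m := by
      have h2m : (1:ℤ) ≤ 2^m := one_le_pow₀ (by norm_num)
      have hA' : (1:ℤ) ≤ (A:ℤ) := by exact_mod_cast hA
      nlinarith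
    rw [dd, hn1, hn2, harg0, harg1, tri_zero, tri_top m hN1, zero_sub, abs_neg,
      abs_of_pos (by positivity)]

noncomputable def Mj (A : ℕ) (n : ℤ) : ℝ :=
  if 2 ≤ n then ((16*A:ℝ)) ^ ((4:ℝ)/3) * ((n:ℝ)) ^ (-((4:ℝ)/3)) else 0

lemma pow8_rpow (m : ℕ) : (((8:ℝ)^m)) ^ ((4:ℝ)/3) = (16:ℝ)^m := by
  have h8 : (8:ℝ)^m = (2:ℝ)^((3*m : ℕ):ℝ) := by
    rw [Real.rpow_natCast, pow_mul]; norm_num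
  rw [h8, ← Real.rpow_mul (by norm_num : (0:ℝ) ≤ 2)]
  have h43 : ((3*m : ℕ):ℝ) * ((4:ℝ)/3) = ((4*m : ℕ):ℝ) := by push_cast; ring
  rw [h43, Real.rpow_natCast, pow_mul]; norm_num

lemma dd_sq_le {A : ℕ} (hA : 1 ≤ A) (n : ℤ) : (dd A n)^2 ≤ Mj A n := by
  rcases le_or_gt n 1 with h | h
  · rw [dd_zero hA h, Mj, if_neg (by omega)]; norm_num
  · have hn : 2 ≤ n := by omega
    rw [Mj, if_pos hn]
    obtain ⟨h1, h2⟩ := idxx_spec hA (by omega : 1 ≤ n - 1)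
    set m := idxx A (n-1) with hm
    have hb := dd_bound hA hn
    have hd2 : (dd A n)^2 ≤ ((16:ℝ)^m)⁻¹ := by
      calc (dd A n)^2 = |dd A n|^2 := (sq_abs _).symm
      _ ≤ (((4:ℝ)^m)⁻¹)^2 := by
          apply pow_le_pow_left₀ (abs_nonneg _) hb
      _ = ((16:ℝ)^m)⁻¹ := by
          have h416 : ((4:ℝ)^m)^2 = (16:ℝ)^m := by
            rw [← pow_mul, mul_comm, pow_mul]; norm_num
          rw [inv_pow, h416]
    have hnle : (n:ℝ) ≤ (16*A:ℝ) * (8:ℝ)^m := by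
      have hint : n ≤ (A:ℤ) * 8^(m+1) := le_trans (by omega) (sS_le_pow hA (m+1))
      have : ((n:ℝ)) ≤ ((A:ℤ) * 8^(m+1) : ℤ) := by exact_mod_cast hint
      calc (n:ℝ) ≤ ((A:ℤ) * 8^(m+1) : ℤ) := this
      _ = (A:ℝ) * (8 * (8:ℝ)^m) := by push_cast; ring
      _ ≤ (16*A:ℝ) * (8:ℝ)^m := by
          have hA8 : (0:ℝ) ≤ (A:ℝ) := by positivity
          have := pow_pos (by norm_num : (0:ℝ) < 8) m
          nlinarith
    have hx : ((n:ℝ)) ^ ((4:ℝ)/3) ≤ ((16*A:ℝ)) ^ ((4:ℝ)/3) * (16:ℝ)^m := by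
      calc ((n:ℝ)) ^ ((4:ℝ)/3) ≤ ((16*A:ℝ) * (8:ℝ)^m) ^ ((4:ℝ)/3) :=
            Real.rpow_le_rpow (by positivity) hnle (by norm_num)
      _ = ((16*A:ℝ)) ^ ((4:ℝ)/3) * (((8:ℝ)^m)) ^ ((4:ℝ)/3) :=
            Real.mul_rpow (by positivity) (by positivity)
      _ = ((16*A:ℝ)) ^ ((4:ℝ)/3) * (16:ℝ)^m := by rw [pow8_rpow]
    have hnpos : (0:ℝ) < (n:ℝ) := by exact_mod_cast (by omega : (0:ℤ) < n)
    have hxpos : (0:ℝ) < ((n:ℝ)) ^ ((4:ℝ)/3) := Real.rpow_pos_of_pos hnpos _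
    have hy : (0:ℝ) < (16:ℝ)^m := by positivity
    have key : ((16:ℝ)^m)⁻¹ ≤ ((16*A:ℝ)) ^ ((4:ℝ)/3) * (((n:ℝ)) ^ ((4:ℝ)/3))⁻¹ := by
      calc ((16:ℝ)^m)⁻¹ = 1 / (16:ℝ)^m := (one_div _).symm
      _ ≤ ((16*A:ℝ)) ^ ((4:ℝ)/3) / ((n:ℝ)) ^ ((4:ℝ)/3) := by
          rw [div_le_div_iff₀ hy hxpos]; linarith
      _ = ((16*A:ℝ)) ^ ((4:ℝ)/3) * (((n:ℝ)) ^ ((4:ℝ)/3))⁻¹ := by rw [div_eq_mul_inv]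
    rw [Real.rpow_neg (le_of_lt hnpos)]
    exact le_trans hd2 key

lemma Mj_summable (A : ℕ) : Summable (Mj A) := by
  apply Summable.of_nat_of_neg
  · apply Summable.of_nonneg_of_le (f := fun n : ℕ =>
      ((16*A:ℝ)) ^ ((4:ℝ)/3) * ((n:ℝ)) ^ (-((4:ℝ)/3)))
    · intro n
      rw [Mj]
      split
      · positivity
      · exact le_refl 0
    · intro n
      rw [Mj]
      split
      · push_cast
        exact le_refl _
      · positivity
    · exact ((Real.summable_nat_rpow).mpr (by norm_num)).mul_left _
  · have : (fun n : ℕ => Mj A (-(n:ℤ))) = fun _ => 0 := by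
      funext n
      rw [Mj, if_neg (by omega)]
    rw [this]
    exact summable_zero

lemma dd_sq_summable {A : ℕ} (hA : 1 ≤ A) : Summable (fun n : ℤ => (dd A n)^2) :=
  Summable.of_nonneg_of_le (fun _ => sq_nonneg _) (dd_sq_le hA) (Mj_summable A)

lemma telescope (A : ℕ) (k : ℕ) (n : ℤ) :
    Hf A n - Hf A (n - (k:ℤ)) = ∑ i ∈ Finset.range k, dd A (n - (i:ℤ)) := by
  induction k with
  | zero => simp
  | succ k ih =>
    rw [Finset.sum_range_succ, ← ih, dd]
    have harg : n - ((k:ℤ)+1) = n - (k:ℤ) - 1 := by ring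
    push_cast
    rw [harg]
    ring

lemma summable_ck {A : ℕ} (hA : 1 ≤ A) (k : ℕ) :
    Summable (fun n : ℤ => (Hf A n - Hf A (n - (k:ℤ)))^2) := by
  apply Summable.of_nonneg_of_le (f := fun n : ℤ =>
      (k:ℝ) * ∑ i ∈ Finset.range k, (dd A (n - (i:ℤ)))^2)
    (fun _ => sq_nonneg _)
  · intro n
    rw [telescope]
    have := sq_sum_le_card_mul_sum_sq (s := Finset.range k)
      (f := fun i => dd A (n - (i:ℤ)))
    simpa using this
  · apply Summable.mul_left
    apply summable_sum
    intro i _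
    exact ((Equiv.subRight (i:ℤ)).summable_iff
      (f := fun n : ℤ => (dd A n)^2)).mpr (dd_sq_summable hA)

lemma Hf_ramp {A : ℕ} (hA : 1 ≤ A) (m : ℕ) {j i : ℤ} (hj0 : 0 ≤ j) (hjN : j < (A:ℤ)*2^m)
    (hi0 : 0 ≤ i) (hiL : i ≤ 4^m) :
    Hf A (sS A m + 2*4^m*j + i) = (i:ℝ)/(4:ℝ)^m := by
  have hL1 : (1:ℤ) ≤ 4^m := one_le_pow₀ (by norm_num)
  have hnn : (0:ℤ) ≤ 2*4^m*j := mul_nonneg (by positivity) hj0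
  have h1 : sS A m ≤ sS A m + 2*4^m*j + i := by linarith
  have h2 : sS A m + 2*4^m*j + i < sS A (m+1) := by
    rw [sS_succ]
    have hj1 : j + 1 ≤ (A:ℤ)*2^m := by omega
    have hmul : 2*4^m*(j+1) ≤ 2*4^m*((A:ℤ)*2^m) :=
      mul_le_mul_of_nonneg_left hj1 (by positivity)
    nlinarith
  rw [Hf_eval hA h1 h2]
  have harg : sS A m + 2*4^m*j + i - sS A m = 2*4^m*j + i := by ring
  rw [harg, tri_eval m hi0 hiL]

set_option maxHeartbeats 1000000 in
lemma lower_bound {A : ℕ} (hA : 1 ≤ A) {k : ℤ} (hk : 1 ≤ k) {D : ℝ} (hD : 0 < D)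
    (hAD : 16*D ≤ (A:ℝ)) :
    D * (k:ℝ) * Real.sqrt (k:ℝ) ≤ ∑' n : ℤ, (Hf A n - Hf A (n - k))^2 := by
  have hex : ∃ m : ℕ, 2*k ≤ (4:ℤ)^m := by
    refine ⟨(2*k).toNat, ?_⟩
    have h1 : ((2*k).toNat : ℤ) = 2*k := Int.toNat_of_nonneg (by omega)
    have h2 : ((2*k).toNat : ℤ) < (2:ℤ)^((2*k).toNat) := by
      exact_mod_cast Nat.lt_two_pow_self (n := (2*k).toNat)
    have h3 : (2:ℤ)^((2*k).toNat) ≤ (4:ℤ)^((2*k).toNat) :=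
      pow_le_pow_left₀ (by norm_num) (by norm_num) _
    omega
  obtain ⟨m, hm, hmin⟩ : ∃ m : ℕ, 2*k ≤ (4:ℤ)^m ∧ ∀ p, p < m → ¬(2*k ≤ (4:ℤ)^p) :=
    ⟨Nat.find hex, Nat.find_spec hex, fun p hp => Nat.find_min hex hp⟩
  have hm8 : (4:ℤ)^m < 8*k := by
    have hm1 : m ≠ 0 := by
      intro h0
      rw [h0] at hm
      simp at hm
      omega
    have hmin' := hmin (m-1) (by omega)
    push_neg at hmin'
    have h4 : (4:ℤ)^m = 4 * 4^(m-1) := by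
      conv_lhs => rw [show m = (m-1)+1 by omega]
      ring
    omega
  have hL1 : (1:ℤ) ≤ (4:ℤ)^m := one_le_pow₀ (by norm_num)
  set N : ℕ := A * 2^m with hNdef
  have hNZ : ((N:ℤ)) = (A:ℤ)*2^m := by rw [hNdef]; push_cast; ring
  set F : Finset ℤ := ((Finset.range N) ×ˢ (Finset.Icc k ((4:ℤ)^m))).image
      (fun p => sS A m + 2*(4:ℤ)^m*p.1 + p.2) with hF
  -- summability
  have hknn : ((k.toNat : ℤ)) = k := Int.toNat_of_nonneg (by omega)
  have hsummable : Summable (fun n : ℤ => (Hf A n - Hf A (n - k))^2) := by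
    have := summable_ck hA k.toNat
    rw [hknn] at this
    exact this
  -- evaluation on F
  have heval : ∀ n ∈ F, (Hf A n - Hf A (n - k))^2 = ((k:ℝ)/(4:ℝ)^m)^2 := by
    intro n hn
    rw [hF, Finset.mem_image] at hn
    obtain ⟨p, hp, rfl⟩ := hn
    rw [Finset.mem_product, Finset.mem_range, Finset.mem_Icc] at hp
    have hp1 : p.1 < N := hp.1
    have hp2 : k ≤ p.2 := hp.2.1
    have hp3 : p.2 ≤ (4:ℤ)^m := hp.2.2
    have hjlt : (p.1:ℤ) < (A:ℤ)*2^m := by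
      rw [← hNZ]
      exact_mod_cast hp1
    have e1 : Hf A (sS A m + 2*(4:ℤ)^m*p.1 + p.2) = ((p.2:ℝ))/(4:ℝ)^m :=
      Hf_ramp hA m (by positivity) hjlt (by omega) hp3
    have harg : sS A m + 2*(4:ℤ)^m*p.1 + p.2 - k = sS A m + 2*(4:ℤ)^m*p.1 + (p.2 - k) := by
      ring
    have e2 : Hf A (sS A m + 2*(4:ℤ)^m*p.1 + p.2 - k) = (((p.2 - k : ℤ)):ℝ)/(4:ℝ)^m := by
      rw [harg]
      exact Hf_ramp hA m (by positivity) hjlt (by omega) (by omega)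
    rw [e1, e2, div_sub_div_same]
    congr 1
    push_cast
    ring
  -- injectivity and cardinality
  have hinj : Set.InjOn (fun p : ℕ × ℤ => sS A m + 2*(4:ℤ)^m*p.1 + p.2)
      (↑((Finset.range N) ×ˢ (Finset.Icc k ((4:ℤ)^m)))) := by
    intro p hp q hq hpq
    simp only [Finset.mem_coe, Finset.mem_product, Finset.mem_range,
      Finset.mem_Icc] at hp hq
    simp only at hpq
    have heq : 2*(4:ℤ)^m*p.1 + p.2 = 2*(4:ℤ)^m*q.1 + q.2 := by linarith
    have hj : (p.1:ℤ) = (q.1:ℤ) := by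
      rcases lt_trichotomy (p.1:ℤ) (q.1:ℤ) with h|h|h
      · exfalso
        have h1 : (p.1:ℤ) + 1 ≤ (q.1:ℤ) := by omega
        have h2 := mul_le_mul_of_nonneg_left h1 (show (0:ℤ) ≤ 2*4^m by positivity)
        nlinarith [hp.2.1, hp.2.2, hq.2.1, hq.2.2]
      · exact h
      · exfalso
        have h1 : (q.1:ℤ) + 1 ≤ (p.1:ℤ) := by omega
        have h2 := mul_le_mul_of_nonneg_left h1 (show (0:ℤ) ≤ 2*4^m by positivity)
        nlinarith [hp.2.1, hp.2.2, hq.2.1, hq.2.2]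
    have hj' : p.1 = q.1 := by exact_mod_cast hj
    have hi : p.2 = q.2 := by
      rw [hj] at heq
      linarith
    exact Prod.ext hj' hi
  have hcard : F.card = N * ((4:ℤ)^m - k + 1).toNat := by
    rw [hF, Finset.card_image_of_injOn hinj, Finset.card_product, Finset.card_range,
      Int.card_Icc]
    congr 1
    omega
  -- sum over F
  have hsumF : ∑ n ∈ F, (Hf A n - Hf A (n - k))^2 = (F.card : ℝ) * ((k:ℝ)/(4:ℝ)^m)^2 := by
    rw [Finset.sum_congr rfl heval, Finset.sum_const, nsmul_eq_mul]
  have hsumle := Summable.sum_le_tsum F (fun n _ => sq_nonneg _) hsummable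
  -- numeric chain
  set u : ℝ := (2:ℝ)^m with hudef
  have hu0 : (0:ℝ) < u := by positivity
  have hu4 : (4:ℝ)^m = u^2 := by
    rw [hudef, ← pow_mul, mul_comm, pow_mul]
    norm_num
  have hkR : (1:ℝ) ≤ (k:ℝ) := by exact_mod_cast hk
  have hmR : 2*(k:ℝ) ≤ u^2 := by
    rw [← hu4]
    exact_mod_cast hm
  have hm8R : u^2 < 8*(k:ℝ) := by
    rw [← hu4]
    exact_mod_cast hm8
  have hNR : 16*D*u ≤ (N:ℝ) := by
    have hNu : (N:ℝ) = (A:ℝ)*u := by rw [hNdef, hudef]; push_cast; ring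
    rw [hNu]
    exact mul_le_mul_of_nonneg_right hAD (le_of_lt hu0)
  set s : ℝ := Real.sqrt (k:ℝ) with hsdef
  have hs0 : 0 ≤ s := Real.sqrt_nonneg _
  have hs2 : s^2 = (k:ℝ) := Real.sq_sqrt (by linarith)
  have hsu : s ≤ u := by
    rw [hsdef]
    calc Real.sqrt (k:ℝ) ≤ Real.sqrt (u^2) := Real.sqrt_le_sqrt (by nlinarith)
    _ = u := Real.sqrt_sq (le_of_lt hu0)
  have hcardR : ((F.card : ℕ) : ℝ) = (N:ℝ) * ((4:ℝ)^m - k + 1) := by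
    rw [hcard]
    have htn : (((4:ℤ)^m - k + 1).toNat : ℤ) = (4:ℤ)^m - k + 1 :=
      Int.toNat_of_nonneg (by omega)
    have hstep : ((N * ((4:ℤ)^m - k + 1).toNat : ℕ) : ℝ)
        = (N:ℝ) * (((((4:ℤ)^m - k + 1).toNat : ℤ)) : ℝ) := by push_cast; ring
    rw [hstep, htn]
    push_cast
    ring
  have hfinal : D * (k:ℝ) * s ≤ (F.card : ℝ) * ((k:ℝ)/(4:ℝ)^m)^2 := by
    rw [hcardR, hu4, div_pow]
    have hu2pos : (0:ℝ) < u^2 := by positivity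
    have hu4pos : (0:ℝ) < (u^2)^2 := by positivity
    rw [show (N:ℝ)*(u^2-(k:ℝ)+1)*((k:ℝ)^2/(u^2)^2)
        = ((N:ℝ)*(u^2-(k:ℝ)+1)*(k:ℝ)^2)/(u^2)^2 from by ring, le_div_iff₀ hu4pos]
    have hk0 : (0:ℝ) ≤ (k:ℝ) := by linarith
    have H1 : (0:ℝ) ≤ (8*(k:ℝ) - u^2) * (D*(k:ℝ)*s*u^2) :=
      mul_nonneg (by linarith) (mul_nonneg (mul_nonneg (mul_nonneg hD.le hk0) hs0) hu2pos.le)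
    have H2 : (0:ℝ) ≤ (u - s) * (8*D*(k:ℝ)^2*u^2) :=
      mul_nonneg (by linarith)
        (mul_nonneg (mul_nonneg (mul_nonneg (by norm_num : (0:ℝ) ≤ 8) hD.le) (sq_nonneg _)) (sq_nonneg u))
    have H3 : (0:ℝ) ≤ ((N:ℝ) - 16*D*u) * ((k:ℝ)^2*u^2) :=
      mul_nonneg (by linarith) (by positivity)
    have H4 : (0:ℝ) ≤ ((N:ℝ)*(k:ℝ)^2) * (u^2 - 2*(k:ℝ) + 2) :=
      mul_nonneg (by positivity) (by linarith)
    nlinarith [H1, H2, H3, H4]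
  calc D * (k:ℝ) * s ≤ (F.card : ℝ) * ((k:ℝ)/(4:ℝ)^m)^2 := hfinal
  _ = ∑ n ∈ F, (Hf A n - Hf A (n - k))^2 := hsumF.symm
  _ ≤ ∑' n : ℤ, (Hf A n - Hf A (n - k))^2 := hsumle

lemma pos_case {A : ℕ} (hA : 1 ≤ A) {D : ℝ} (hD : 0 < D) (hAD : 16*D ≤ (A:ℝ))
    {k : ℤ} (hk : 1 ≤ k) :
    Summable (fun n : ℤ => (Hf A n - Hf A (n - k)) ^ 2) ∧
      D * |(k : ℝ)| ^ (3 / 2 : ℝ) ≤ ∑' n : ℤ, (Hf A n - Hf A (n - k)) ^ 2 := by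
  have hknn : ((k.toNat : ℤ)) = k := Int.toNat_of_nonneg (by omega)
  have hsummable : Summable (fun n : ℤ => (Hf A n - Hf A (n - k))^2) := by
    have := summable_ck hA k.toNat
    rw [hknn] at this
    exact this
  refine ⟨hsummable, ?_⟩
  have hkpos : (0:ℝ) < (k:ℝ) := by exact_mod_cast (by omega : (0:ℤ) < k)
  have habs : |(k:ℝ)| = (k:ℝ) := abs_of_pos hkpos
  have hrw : |(k:ℝ)| ^ (3/2 : ℝ) = (k:ℝ) * Real.sqrt (k:ℝ) := by
    rw [habs, show (3/2 : ℝ) = 1 + 1/2 by norm_num, Real.rpow_add hkpos, Real.rpow_one,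
      ← Real.sqrt_eq_rpow]
  rw [hrw, ← mul_assoc]
  exact lower_bound hA hk hD hAD

theorem stmt13 (D : ℝ) (hD : 0 < D) :
    ∃ H : ℤ → ℝ, (∀ n, H n ∈ Set.Icc (0 : ℝ) 1) ∧ (∀ n ≤ 0, H n = 0) ∧
      ∀ k : ℤ, Summable (fun n : ℤ => (H n - H (n - k)) ^ 2) ∧
        D * |(k : ℝ)| ^ (3 / 2 : ℝ) ≤ ∑' n : ℤ, (H n - H (n - k)) ^ 2 := by
  set A : ℕ := ⌈16*D⌉₊ + 1 with hAdef
  have hA : 1 ≤ A := by omega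
  have hAD : 16*D ≤ (A:ℝ) := by
    calc 16*D ≤ (⌈16*D⌉₊ : ℝ) := Nat.le_ceil _
    _ ≤ (A:ℝ) := by rw [hAdef]; push_cast; linarith
  refine ⟨Hf A, fun n => Hf_mem A n, fun n hn => Hf_zero A hn, ?_⟩
  intro k
  rcases lt_trichotomy k 0 with hneg | hzero | hpos
  · -- negative k : reduce to -k
    have hk' : 1 ≤ -k := by omega
    obtain ⟨hs, hb⟩ := pos_case hA hD hAD hk'
    have key : ∀ n : ℤ, (Hf A n - Hf A (n - k))^2
        = (fun x : ℤ => (Hf A x - Hf A (x - (-k)))^2) (n + (-k)) := by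
      intro n
      simp only
      have e1 : n + (-k) - (-k) = n := by ring
      have e2 : n - k = n + (-k) := by ring
      rw [e1, e2]
      ring
    have hcomp : (fun n : ℤ => (Hf A n - Hf A (n - k))^2)
        = (fun x : ℤ => (Hf A x - Hf A (x - (-k)))^2) ∘ (Equiv.addRight (-k)) := by
      funext n
      simpa using key n
    constructor
    · rw [hcomp]
      exact (Equiv.summable_iff (Equiv.addRight (-k))).mpr hs
    · have htsum : ∑' n : ℤ, (Hf A n - Hf A (n - k))^2
          = ∑' n : ℤ, (Hf A n - Hf A (n - (-k)))^2 := by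
        rw [hcomp]
        exact Equiv.tsum_eq (Equiv.addRight (-k)) (fun x : ℤ => (Hf A x - Hf A (x - (-k)))^2)
      have habs : |(k:ℝ)| = |((-k : ℤ) : ℝ)| := by push_cast; rw [abs_neg]
      rw [htsum, habs]
      exact hb
  · subst hzero
    constructor
    · have hz : (fun n : ℤ => (Hf A n - Hf A (n - 0))^2) = fun _ => (0:ℝ) := by
        funext n; simp
      rw [hz]
      exact summable_zero
    · have h0 : ∀ n : ℤ, (Hf A n - Hf A (n - 0))^2 = 0 := by intro n; simp
      rw [tsum_congr h0]
      simp [Real.zero_rpow (by norm_num : (3/2:ℝ) ≠ 0)]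
  · exact pos_case hA hD hAD (by omega)
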